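/- Let 𝒴 be a finite linearly ordered set and let Q, Q' : 𝒴 → (0,1] be strictly positive probability mass functions on 𝒴. Let m > 0 and define A(y) = e^{m·(Q(≤y) − 1)} − e^{m·(Q(<y) − 1)} and A'(y) = e^{m·(Q'(≤y) − 1)} − e^{m·(Q'(<y) − 1)} (the selection algorithm with K ∼ Poisson(m)). Let δ : ℝ → [0,∞) be such that for every s ∈ ℝ both ∑_y max(Q(y) − e^s Q'(y), 0) ≤ δ(s) and ∑_y max(Q'(y) − e^s Q(y), 0) ≤ δ(s). Then for every ε > 0 and every ε₁ ≥ 0: ∑_{y∈𝒴} max(A(y) − e^ε·A'(y), 0) ≤ m · δ(ε̂), where ε̂ = ε − m·(e^{ε₁} − 1) − m·δ(ε₁). -/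

import Mathlib

open Finset Real

/-- Cumulative mass `Q(≤ y)` of a pmf on a finite linearly ordered set. -/
noncomputable def cumLE {Y : Type*} [Fintype Y] [LinearOrder Y] (Q : Y → ℝ) (y : Y) : ℝ :=
  ∑ z ∈ Finset.univ.filter (fun z => z ≤ y), Q z

/-- Cumulative mass `Q(< y)` of a pmf on a finite linearly ordered set. -/
noncomputable def cumLT {Y : Type*} [Fintype Y] [LinearOrder Y] (Q : Y → ℝ) (y : Y) : ℝ :=
  ∑ z ∈ Finset.univ.filter (fun z => z < y), Q z

lemma cumLE_eq_cumLT_add {Y : Type*} [Fintype Y] [LinearOrder Y] (Q : Y → ℝ) (y : Y) :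
    cumLE Q y = cumLT Q y + Q y := by
  unfold cumLE cumLT
  have h : Finset.univ.filter (fun z => z ≤ y)
      = insert y (Finset.univ.filter (fun z => z < y)) := by
    ext z
    simp [le_iff_lt_or_eq, or_comm]
  rw [h, Finset.sum_insert (by simp)]
  ring

lemma cumLE_le_one {Y : Type*} [Fintype Y] [LinearOrder Y] (Q : Y → ℝ)
    (hpos : ∀ y, 0 < Q y) (hsum : ∑ y, Q y = 1) (y : Y) : cumLE Q y ≤ 1 := by
  rw [← hsum]
  exact Finset.sum_le_sum_of_subset_of_nonneg (Finset.filter_subset _ _)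
    (fun i _ _ => (hpos i).le)


/-- Corollary 5.8: hockey-stick privacy-profile bound for private selection with a
Poisson distributed number of candidates `K ∼ Poisson(m)`. -/
theorem private_selection_poisson_bound
    {Y : Type*} [Fintype Y] [LinearOrder Y]
    (Q Q' : Y → ℝ)
    (hQ_pos : ∀ y, 0 < Q y) (hQ_le : ∀ y, Q y ≤ 1) (hQ_sum : ∑ y, Q y = 1)
    (hQ'_pos : ∀ y, 0 < Q' y) (hQ'_le : ∀ y, Q' y ≤ 1) (hQ'_sum : ∑ y, Q' y = 1)
    (m : ℝ) (hm : 0 < m)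
    (A A' : Y → ℝ)
    (hA : ∀ y, A y = Real.exp (m * (cumLE Q y - 1)) - Real.exp (m * (cumLT Q y - 1)))
    (hA' : ∀ y, A' y = Real.exp (m * (cumLE Q' y - 1)) - Real.exp (m * (cumLT Q' y - 1)))
    (δ : ℝ → ℝ) (hδ_nonneg : ∀ s, 0 ≤ δ s)
    (hδ : ∀ s, ∑ y, max (Q y - Real.exp s * Q' y) 0 ≤ δ s)
    (hδ' : ∀ s, ∑ y, max (Q' y - Real.exp s * Q y) 0 ≤ δ s)
    (ε : ℝ) (hε : 0 < ε) (ε₁ : ℝ) (hε₁ : 0 ≤ ε₁) :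
    ∑ y, max (A y - Real.exp ε * A' y) 0
      ≤ m * δ (ε - m * (Real.exp ε₁ - 1) - m * δ ε₁) := by
  set εh : ℝ := ε - m * (Real.exp ε₁ - 1) - m * δ ε₁ with hεh
  set D : ℝ := (Real.exp ε₁ - 1) + δ ε₁ with hD
  have hexp1 : (1:ℝ) ≤ Real.exp ε₁ := by
    rw [← Real.exp_zero]; exact Real.exp_le_exp.mpr hε₁
  have hD0 : 0 ≤ D := by have := hδ_nonneg ε₁; rw [hD]; linarith
  have hεhD : εh = ε - m * D := by rw [hεh, hD]; ring
  -- pointwise bound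
  have key : ∀ y, A y - Real.exp ε * A' y ≤ m * max (Q y - Real.exp εh * Q' y) 0 := by
    intro y
    set C : ℝ := m * max (Q y - Real.exp εh * Q' y) 0 with hC
    have hC0 : 0 ≤ C := mul_nonneg hm.le (le_max_right _ _)
    -- bound on the interpolated cumulative difference
    have hcum : ∀ t ∈ Set.Icc (0:ℝ) 1,
        (cumLT Q y + t * Q y) - (cumLT Q' y + t * Q' y) ≤ D := by
      rintro t ⟨ht0, ht1⟩
      set S := Finset.univ.filter (fun z => z < y) with hS
      set M : Y → ℝ := fun z => max (Q z - Real.exp ε₁ * Q' z) 0 with hM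
      have hz : ∀ z, Q z - Q' z ≤ M z + (Real.exp ε₁ - 1) * Q' z := by
        intro z
        have := le_max_left (Q z - Real.exp ε₁ * Q' z) 0
        rw [hM]; dsimp only; nlinarith
      have hsum1 : cumLT Q y - cumLT Q' y
          ≤ (∑ z ∈ S, M z) + (Real.exp ε₁ - 1) * cumLT Q' y := by
        unfold cumLT
        rw [← Finset.sum_sub_distrib, Finset.mul_sum, ← Finset.sum_add_distrib]
        exact Finset.sum_le_sum (fun z _ => hz z)
      have hMy0 : 0 ≤ M y := le_max_right _ _
      have hsumM : (∑ z ∈ S, M z) + M y ≤ δ ε₁ := by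
        have hins : (∑ z ∈ S, M z) + M y = ∑ z ∈ insert y S, M z := by
          rw [Finset.sum_insert (by simp [hS])]; ring
        rw [hins]
        calc ∑ z ∈ insert y S, M z ≤ ∑ z, M z :=
              Finset.sum_le_sum_of_subset_of_nonneg (Finset.subset_univ _)
                (fun i _ _ => le_max_right _ _)
          _ ≤ δ ε₁ := hδ ε₁
      have hty : t * (Q y - Q' y) ≤ M y + (Real.exp ε₁ - 1) * (t * Q' y) := by
        have h1 := hz y
        nlinarith [(hQ'_pos y).le]
      have hcumQ'1 : cumLT Q' y + t * Q' y ≤ 1 := by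
        have h1 : cumLT Q' y + t * Q' y ≤ cumLE Q' y := by
          rw [cumLE_eq_cumLT_add]
          nlinarith [(hQ'_pos y).le]
        exact h1.trans (cumLE_le_one Q' hQ'_pos hQ'_sum y)
      have hcumQ'0 : 0 ≤ cumLT Q' y + t * Q' y := by
        have : 0 ≤ cumLT Q' y := Finset.sum_nonneg (fun z _ => (hQ'_pos z).le)
        nlinarith [(hQ'_pos y).le]
      rw [hD]
      nlinarith [hsum1, hsumM, hty]
    have hU1 : ∀ t ∈ Set.Icc (0:ℝ) 1, cumLT Q y + t * Q y ≤ 1 := by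
      rintro t ⟨ht0, ht1⟩
      have h1 : cumLT Q y + t * Q y ≤ cumLE Q y := by
        rw [cumLE_eq_cumLT_add]
        nlinarith [(hQ_pos y).le]
      exact h1.trans (cumLE_le_one Q hQ_pos hQ_sum y)
    set f : ℝ → ℝ := fun t =>
      Real.exp (m * (cumLT Q y + t * Q y - 1))
        - Real.exp ε * Real.exp (m * (cumLT Q' y + t * Q' y - 1)) - t * C with hf
    have hderiv : ∀ t : ℝ, HasDerivAt f
        (m * Q y * Real.exp (m * (cumLT Q y + t * Q y - 1))
          - Real.exp ε * (m * Q' y * Real.exp (m * (cumLT Q' y + t * Q' y - 1))) - C) t := by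
      intro t
      have hlin : ∀ (a q : ℝ), HasDerivAt (fun s : ℝ => m * (a + s * q - 1)) (m * q) t := by
        intro a q
        have h1 : HasDerivAt (fun s : ℝ => a + s * q - 1) q t := by
          simpa using (((hasDerivAt_id t).mul_const q).const_add a).sub_const 1
        simpa using h1.const_mul m
      have h1 := (hlin (cumLT Q y) (Q y)).exp
      have h2 := ((hlin (cumLT Q' y) (Q' y)).exp).const_mul (Real.exp ε)
      have h3 : HasDerivAt (fun s : ℝ => s * C) C t := by
        simpa using (hasDerivAt_id t).mul_const C
      have := (h1.sub h2).sub h3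
      refine this.congr_deriv ?_
      ring
    have hanti : AntitoneOn f (Set.Icc 0 1) := by
      apply antitoneOn_of_deriv_nonpos (convex_Icc 0 1)
      · exact (fun t _ => ((hderiv t).differentiableAt).continuousAt.continuousWithinAt)
      · exact fun t _ => ((hderiv t).differentiableAt).differentiableWithinAt
      · intro t ht
        rw [interior_Icc] at ht
        rw [(hderiv t).deriv]
        set U : ℝ := cumLT Q y + t * Q y with hU
        set V : ℝ := cumLT Q' y + t * Q' y with hV
        have htIcc : t ∈ Set.Icc (0:ℝ) 1 := ⟨ht.1.le, ht.2.le⟩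
        have hUV : U - V ≤ D := hcum t htIcc
        have hUle : U ≤ 1 := hU1 t htIcc
        have hVU : Real.exp (m * (U - 1)) * Real.exp (-(m * D)) ≤ Real.exp (m * (V - 1)) := by
          rw [← Real.exp_add]
          apply Real.exp_le_exp.mpr
          nlinarith
        have hsplit : Real.exp εh = Real.exp ε * Real.exp (-(m * D)) := by
          rw [← Real.exp_add, hεhD]; ring_nf
        have hfac0 : (0:ℝ) < Real.exp (m * (U - 1)) := Real.exp_pos _
        have hfac1 : Real.exp (m * (U - 1)) ≤ 1 := by
          have h0 : m * (U - 1) ≤ 0 := by nlinarith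
          simpa using Real.exp_le_exp.mpr h0
        have hstep : m * Q y * Real.exp (m * (U - 1))
            - Real.exp ε * (m * Q' y * Real.exp (m * (V - 1)))
            ≤ Real.exp (m * (U - 1)) * (m * (Q y - Real.exp εh * Q' y)) := by
          have hx : 0 ≤ Real.exp ε * (m * Q' y) :=
            mul_nonneg (Real.exp_pos ε).le (mul_nonneg hm.le (hQ'_pos y).le)
          have h2 : Real.exp ε * (m * Q' y) * (Real.exp (m * (U - 1)) * Real.exp (-(m * D)))
              ≤ Real.exp ε * (m * Q' y) * Real.exp (m * (V - 1)) :=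
            mul_le_mul_of_nonneg_left hVU hx
          rw [hsplit]
          linarith [h2]
        have hstep2 : Real.exp (m * (U - 1)) * (m * (Q y - Real.exp εh * Q' y)) ≤ C := by
          rcases le_or_gt (Q y - Real.exp εh * Q' y) 0 with h | h
          · have : Real.exp (m * (U - 1)) * (m * (Q y - Real.exp εh * Q' y)) ≤ 0 :=
              mul_nonpos_of_nonneg_of_nonpos hfac0.le
                (mul_nonpos_of_nonneg_of_nonpos hm.le h)
            linarith
          · rw [hC, max_eq_left h.le]
            exact mul_le_of_le_one_left (mul_nonneg hm.le h.le) hfac1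
        linarith
    have hf10 : f 1 ≤ f 0 :=
      hanti (Set.left_mem_Icc.mpr zero_le_one) (Set.right_mem_Icc.mpr zero_le_one) zero_le_one
    rw [hf] at hf10
    simp only [one_mul, zero_mul, mul_zero, add_zero, sub_zero] at hf10
    rw [hA y, hA' y, cumLE_eq_cumLT_add Q y, cumLE_eq_cumLT_add Q' y]
    linarith
  calc ∑ y, max (A y - Real.exp ε * A' y) 0
      ≤ ∑ y, m * max (Q y - Real.exp εh * Q' y) 0 :=
        Finset.sum_le_sum (fun y _ => max_le (key y)
          (mul_nonneg hm.le (le_max_right _ _)))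
    _ = m * ∑ y, max (Q y - Real.exp εh * Q' y) 0 := (Finset.mul_sum _ _ _).symm
    _ ≤ m * δ εh := mul_le_mul_of_nonneg_left (hδ εh) hm.le
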